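/- The matrices E11, E22, E33, E12, E21, E23, E32 satisfy the defining relations of the four dimensional representation of the quantum superalgebra U_q[gl(2|1)]: (i) E12 E21 - E21 E12 = diag(0, -1, 1, 0), which equals the entrywise q-bracket of E11 - E22 = diag(0, -1, 1, 0); (ii) E23 E32 + E32 E23 = diag([alpha]_q, [alpha+1]_q, [alpha]_q, [alpha+1]_q), which equals the entrywise q-bracket of E22 + E33 = diag(alpha, alpha+1, alpha, alpha+1); and (iii) for every i in {1,2,3} and every (j,k) in {(1,2),(2,1),(2,3),(3,2)}: Eii Ejk - Ejk Eii = delta(j,i) Eik - delta(i,k) Eji, where delta is the Kronecker delta (all matrices appearing on the right-hand sides are among those defined). -/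

import Mathlib

open Matrix

/-- The `q`-bracket `[x]_q = (qˣ - q⁻ˣ)/(q - q⁻¹)` for real `x` (real powers). -/
noncomputable def qBracket (q x : ℝ) : ℝ := (q ^ x - q ^ (-x)) / (q - q⁻¹)

/-- `π(E¹₁) = -e(2,2) - e(4,4)` (indices 0-based in `Fin 4`). -/
noncomputable def glE11 : Matrix (Fin 4) (Fin 4) ℝ :=
  -Matrix.single 1 1 1 - Matrix.single 3 3 1

/-- `π(E²₂) = -e(3,3) - e(4,4)`. -/
noncomputable def glE22 : Matrix (Fin 4) (Fin 4) ℝ :=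
  -Matrix.single 2 2 1 - Matrix.single 3 3 1

/-- `π(E³₃) = α e(1,1) + (α+1)(e(2,2) + e(3,3)) + (α+2) e(4,4)`. -/
noncomputable def glE33 (α : ℝ) : Matrix (Fin 4) (Fin 4) ℝ :=
  α • Matrix.single 0 0 1 + (α + 1) • (Matrix.single 1 1 1 + Matrix.single 2 2 1)
    + (α + 2) • Matrix.single 3 3 1

/-- `π(E¹₂) = -e(3,2)`. -/
noncomputable def glE12 : Matrix (Fin 4) (Fin 4) ℝ := -Matrix.single 2 1 1

/-- `π(E²₁) = -e(2,3)`. -/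
noncomputable def glE21 : Matrix (Fin 4) (Fin 4) ℝ := -Matrix.single 1 2 1

/-- `π(E²₃) = √[α]_q e(1,3) - √[α+1]_q e(2,4)`. -/
noncomputable def glE23 (q α : ℝ) : Matrix (Fin 4) (Fin 4) ℝ :=
  Real.sqrt (qBracket q α) • Matrix.single 0 2 1
    - Real.sqrt (qBracket q (α + 1)) • Matrix.single 1 3 1

/-- `π(E³₂) = √[α]_q e(3,1) - √[α+1]_q e(4,2)`. -/
noncomputable def glE32 (q α : ℝ) : Matrix (Fin 4) (Fin 4) ℝ :=
  Real.sqrt (qBracket q α) • Matrix.single 2 0 1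
    - Real.sqrt (qBracket q (α + 1)) • Matrix.single 3 1 1

/-- The generator `π(Eⁱⱼ)` indexed by the superalgebra indices `i, j ∈ {1,2,3}`:
only the seven simple generators are defined, all other values are `0`. -/
noncomputable def glE (q α : ℝ) : ℕ → ℕ → Matrix (Fin 4) (Fin 4) ℝ
  | 1, 1 => glE11
  | 2, 2 => glE22
  | 3, 3 => glE33 α
  | 1, 2 => glE12
  | 2, 1 => glE21
  | 2, 3 => glE23 q α
  | 3, 2 => glE32 q α
  | _, _ => 0

lemma qB_zero (q : ℝ) : qBracket q 0 = 0 := by simp [qBracket]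

lemma qB_neg (q x : ℝ) : qBracket q (-x) = -qBracket q x := by
  simp [qBracket, neg_div]; ring_nf

lemma qsub_ne (q : ℝ) (hq : 0 < q) (hq1 : q ≠ 1) : q - q⁻¹ ≠ 0 := by
  intro h
  have : q * q = 1 := by field_simp at h; nlinarith [hq]
  have : q = 1 := by nlinarith
  exact hq1 this

lemma qB_one (q : ℝ) (hq : 0 < q) (hq1 : q ≠ 1) : qBracket q 1 = 1 := by
  rw [qBracket, Real.rpow_one, Real.rpow_neg_one, div_self (qsub_ne q hq hq1)]

lemma qB_nonneg (q x : ℝ) (hq : 0 < q) (hq1 : q ≠ 1) (hx : 0 ≤ x) : 0 ≤ qBracket q x := by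
  rcases lt_or_gt_of_ne hq1 with h | h
  · have h1 : q ^ x ≤ q ^ (-x) := Real.rpow_le_rpow_of_exponent_ge hq h.le (by linarith)
    have h2 : 1 < q⁻¹ := one_lt_inv₀ hq |>.mpr h
    have : qBracket q x = (q ^ (-x) - q ^ x) / (q⁻¹ - q) := by
      rw [qBracket, ← neg_div_neg_eq]; ring_nf
    rw [this]; apply div_nonneg <;> linarith
  · have h1 : q ^ (-x) ≤ q ^ x := Real.rpow_le_rpow_of_exponent_le h.le (by linarith)
    have h2 : q⁻¹ < 1 := inv_lt_one_of_one_lt₀ h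
    rw [qBracket]; apply div_nonneg <;> linarith

set_option maxHeartbeats 4000000 in
/-- the matrices `E11, E22, E33, E12, E21, E23, E32` satisfy the
defining relations of the four dimensional representation of `U_q[gl(2|1)]`:
(i) `[E12, E21] = diag(0,-1,1,0)`, which is the entrywise `q`-bracket of
`E11 - E22 = diag(0,-1,1,0)`; (ii) `{E23, E32} = diag([α]_q, [α+1]_q, [α]_q, [α+1]_q)`,
the entrywise `q`-bracket of `E22 + E33 = diag(α, α+1, α, α+1)`; and (iii) the
Cartan relations `[Eii, Ejk] = δ(j,i) Eik - δ(i,k) Eji`. -/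
theorem glTwoOne_representation_relations (q α : ℝ) (hq : 0 < q) (hq1 : q ≠ 1) (hα : 0 < α) :
    (glE12 * glE21 - glE21 * glE12 = diagonal ![0, -1, 1, 0] ∧
      (diagonal ![0, -1, 1, 0] : Matrix (Fin 4) (Fin 4) ℝ)
        = diagonal (fun i => qBracket q (![0, -1, 1, 0] i)) ∧
      glE11 - glE22 = diagonal ![0, -1, 1, 0]) ∧
    (glE23 q α * glE32 q α + glE32 q α * glE23 q α =
        diagonal ![qBracket q α, qBracket q (α + 1), qBracket q α, qBracket q (α + 1)] ∧
      glE22 + glE33 α = diagonal ![α, α + 1, α, α + 1]) ∧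
    (∀ i ∈ ({1, 2, 3} : Set ℕ), ∀ jk ∈ ({(1, 2), (2, 1), (2, 3), (3, 2)} : Set (ℕ × ℕ)),
      glE q α i i * glE q α jk.1 jk.2 - glE q α jk.1 jk.2 * glE q α i i =
        (if jk.1 = i then glE q α i jk.2 else 0) - (if i = jk.2 then glE q α jk.1 i else 0)) := by
  have hsa : Real.sqrt (qBracket q α) * Real.sqrt (qBracket q α) = qBracket q α :=
    Real.mul_self_sqrt (qB_nonneg q α hq hq1 hα.le)
  have hsa1 : Real.sqrt (qBracket q (α+1)) * Real.sqrt (qBracket q (α+1)) = qBracket q (α+1) :=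
    Real.mul_self_sqrt (qB_nonneg q (α+1) hq hq1 (by linarith))
  refine ⟨⟨?_, ?_, ?_⟩, ⟨?_, ?_⟩, ?_⟩
  · ext i j
    fin_cases i <;> fin_cases j <;>
      simp [glE12, glE21, Matrix.mul_apply, Fin.sum_univ_four, Matrix.single,
        Matrix.diagonal_apply]
  · ext i j
    fin_cases i <;> fin_cases j <;>
      simp [Matrix.diagonal_apply, qB_zero, qB_one q hq hq1, show (-1:ℝ) = -(1:ℝ) from rfl,
        qB_neg, qB_one q hq hq1]
  · ext i j
    fin_cases i <;> fin_cases j <;>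
      simp [glE11, glE22, Matrix.single, Matrix.diagonal_apply]
  · ext i j
    fin_cases i <;> fin_cases j <;>
      simp [glE23, glE32, Matrix.mul_apply, Fin.sum_univ_four, Matrix.single,
        Matrix.diagonal_apply, hsa, hsa1]
  · ext i j
    fin_cases i <;> fin_cases j <;>
      simp [glE22, glE33, Matrix.single, Matrix.diagonal_apply] <;> ring
  · rintro i hi jk hjk
    simp only [Set.mem_insert_iff, Set.mem_singleton_iff] at hi hjk
    rcases hi with rfl | rfl | rfl <;>
      rcases hjk with rfl | rfl | rfl | rfl <;>
      · ext a b
        fin_cases a <;> fin_cases b <;>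
          simp [glE, glE11, glE22, glE33, glE12, glE21, glE23, glE32,
            Matrix.mul_apply, Fin.sum_univ_four, Matrix.single] <;> ring
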